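/- For every real α < −1, the function F^{(α)} is μ-integrable on G and ∫_G F^{(α)}(y) dμ(y) = 0. -/

import Mathlib

open MeasureTheory Filter Topology

/-- for real `α < −1`, the function `F^{(α)}` is `μ`-integrable on `G`
and `∫_G F^{(α)}(y) dμ(y) = 0`. -/
theorem stmt4
    (q : ℕ) (hq : 2 ≤ q)
    (m : ℕ → ℕ) (hm0 : m 0 = 0) (hm1 : m 1 = 1)
    (hmgrow : ∀ n : ℕ, 1 ≤ n → 2 * m n ≤ m (n + 1))
    (G : Type*) [CommGroup G] [TopologicalSpace G] [IsTopologicalGroup G]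
    [CompactSpace G] [MeasurableSpace G] [BorelSpace G]
    (μ : Measure G) [μ.IsHaarMeasure] [IsProbabilityMeasure μ]
    (V : ℕ → Subgroup G) (hVopen : ∀ n, IsOpen (V n : Set G))
    (hV0 : V 0 = ⊤) (hVdesc : ∀ n, V (n + 1) ≤ V n)
    (hVmeas : ∀ n, μ (V n : Set G) = ((q : ENNReal) ^ (n * m n))⁻¹)
    (α : ℝ) (hα : α < -1)
    (F : G → ℝ)
    (hF : ∀ l : ℕ, ∀ y ∈ (V l : Set G) \ (V (l + 1) : Set G),
      F y = -(q : ℝ) ^ α + ∑ n ∈ Finset.Icc 1 l,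
        ((q : ℝ) ^ (α * ((n * m n : ℕ) : ℝ))
            - (q : ℝ) ^ (α * (((n + 1) * m (n + 1) : ℕ) : ℝ))) * (q : ℝ) ^ (n * m n))
    (hF0 : ∀ y ∈ ⋂ n : ℕ, (V n : Set G), F y = 0) :
    Integrable F μ ∧ ∫ y : G, F y ∂μ = 0 := by
  classical
  have hq2 : (2:ℝ) ≤ (q:ℝ) := by exact_mod_cast hq
  have hq0' : (0:ℝ) < (q:ℝ) := by linarith
  have hq1 : (1:ℝ) < (q:ℝ) := by linarith
  have hα0 : α < 0 := by linarith
  have hα1 : α + 1 < 0 := by linarith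
  -- arithmetic facts about m
  have hm_one : ∀ n, 1 ≤ n → 1 ≤ m n := by
    intro n
    induction n with
    | zero => intro h; omega
    | succ k ih =>
      intro _
      rcases Nat.eq_zero_or_pos k with hk | hk
      · subst hk; simp [hm1]
      · have h1 := hmgrow k hk
        have h2 := ih hk
        omega
  have hnm : ∀ n, n ≤ n * m n := by
    intro n
    rcases Nat.eq_zero_or_pos n with h | h
    · simp [h]
    · calc n = n * 1 := (mul_one n).symm
        _ ≤ n * m n := Nat.mul_le_mul_left n (hm_one n h)
  have hmono : ∀ n, n * m n ≤ (n+1) * m (n+1) := by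
    intro n
    rcases Nat.eq_zero_or_pos n with h | h
    · simp [h]
    · have h1 := hmgrow n h
      have h2 : m n ≤ m (n+1) := by omega
      exact Nat.mul_le_mul (Nat.le_succ n) h2
  -- abbreviations
  set a : ℕ → ℝ := fun n => (q : ℝ) ^ (α * ((n * m n : ℕ) : ℝ)) with ha_def
  set b : ℕ → ℝ := fun n => (q : ℝ) ^ (n * m n) with hb_def
  set c : ℕ → ℝ := fun l => -(q : ℝ) ^ α +
      ∑ n ∈ Finset.Icc 1 l, (a n - a (n+1)) * b n with hc_def
  set s : ℝ := (q : ℝ) ^ α with hs_def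
  set t : ℝ := (q : ℝ) ^ (α + 1) with ht_def
  have hs0 : 0 < s := Real.rpow_pos_of_pos hq0' _
  have hs1 : s < 1 := Real.rpow_lt_one_of_one_lt_of_neg hq1 hα0
  have ht0 : 0 < t := Real.rpow_pos_of_pos hq0' _
  have ht1 : t < 1 := Real.rpow_lt_one_of_one_lt_of_neg hq1 hα1
  have ha_pos : ∀ n, 0 < a n := fun n => Real.rpow_pos_of_pos hq0' _
  have hb_pos : ∀ n, 0 < b n := fun n => pow_pos hq0' _
  have hb_eq : ∀ n, b n = (q : ℝ) ^ (((n * m n : ℕ)) : ℝ) :=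
    fun n => (Real.rpow_natCast _ _).symm
  have hb_ge2 : ∀ n, (2:ℝ) ^ n ≤ b n := by
    intro n
    calc (2:ℝ) ^ n ≤ (q:ℝ) ^ n := pow_le_pow_left₀ (by norm_num) hq2 n
      _ ≤ (q:ℝ) ^ (n * m n) := pow_le_pow_right₀ hq1.le (hnm n)
  have ha_anti : ∀ n, a (n+1) ≤ a n := by
    intro n
    apply Real.rpow_le_rpow_of_exponent_le hq1.le
    have hcast : ((n * m n : ℕ) : ℝ) ≤ (((n+1) * m (n+1) : ℕ) : ℝ) :=
      Nat.cast_le.mpr (hmono n)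
    exact mul_le_mul_of_nonpos_left hcast hα0.le
  have hab_le : ∀ n, a n * b n ≤ t ^ n := by
    intro n
    have h1 : a n * b n = (q:ℝ) ^ ((α + 1) * ((n * m n : ℕ) : ℝ)) := by
      rw [hb_eq, ha_def, ← Real.rpow_add hq0']
      ring_nf
    have h2 : (α + 1) * ((n * m n : ℕ) : ℝ) ≤ (α + 1) * (n : ℝ) := by
      have hcast : ((n : ℕ) : ℝ) ≤ ((n * m n : ℕ) : ℝ) := Nat.cast_le.mpr (hnm n)
      exact mul_le_mul_of_nonpos_left hcast hα1.le
    have h3 : (q:ℝ) ^ ((α + 1) * (n : ℝ)) = t ^ n := by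
      rw [Real.rpow_mul hq0'.le, Real.rpow_natCast]
    calc a n * b n = (q:ℝ) ^ ((α + 1) * ((n * m n : ℕ) : ℝ)) := h1
      _ ≤ (q:ℝ) ^ ((α + 1) * (n : ℝ)) := Real.rpow_le_rpow_of_exponent_le hq1.le h2
      _ = t ^ n := h3
  -- the bound C
  set C : ℝ := s + (1 - t)⁻¹ with hC_def
  have h1t : 0 < 1 - t := by linarith
  have hC0 : 0 ≤ C := by positivity
  have hc_bd : ∀ l, |c l| ≤ C := by
    intro l
    have hsum0 : 0 ≤ ∑ n ∈ Finset.Icc 1 l, (a n - a (n+1)) * b n :=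
      Finset.sum_nonneg fun n _ =>
        mul_nonneg (sub_nonneg.mpr (ha_anti n)) (hb_pos n).le
    have hsumle : ∑ n ∈ Finset.Icc 1 l, (a n - a (n+1)) * b n ≤ (1 - t)⁻¹ := by
      calc ∑ n ∈ Finset.Icc 1 l, (a n - a (n+1)) * b n
          ≤ ∑ n ∈ Finset.Icc 1 l, t ^ n := by
            apply Finset.sum_le_sum
            intro n _
            have h1 : (a n - a (n+1)) * b n ≤ a n * b n := by
              have := (ha_pos (n+1)).le
              have := (hb_pos n).le
              nlinarith
            exact h1.trans (hab_le n)
        _ ≤ ∑' n : ℕ, t ^ n :=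
            Summable.sum_le_tsum _ (fun n _ => (pow_pos ht0 n).le)
              (summable_geometric_of_lt_one ht0.le ht1)
        _ = (1 - t)⁻¹ := tsum_geometric_of_lt_one ht0.le ht1
    rw [hc_def]
    simp only
    rw [abs_le]
    constructor
    · have : 0 < (1 - t)⁻¹ := by positivity
      simp only [hC_def]
      linarith
    · simp only [hC_def]
      linarith
  have ha1 : a 1 = s := by
    simp only [ha_def, hs_def, hm1, mul_one, one_mul, Nat.cast_one]
  have hc0 : c 0 = -(a 1) := by
    simp [hc_def, ha1]
  have hb0 : b 0 = 1 := by simp [hb_def, hm0]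
  have hcsucc : ∀ N, c (N+1) = c N + (a (N+1) - a (N+2)) * b (N+1) := by
    intro N
    simp only [hc_def]
    rw [Finset.sum_Icc_succ_top (by omega : 1 ≤ N + 1)]
    ring
  -- the sets
  set A : ℕ → Set G := fun l => (V l : Set G) \ (V (l+1) : Set G) with hA_def
  have hAmeas : ∀ l, MeasurableSet (A l) :=
    fun l => (hVopen l).measurableSet.diff (hVopen (l+1)).measurableSet
  have hanti : Antitone V := antitone_nat_of_succ_le hVdesc
  have hVsub : ∀ k l, k ≤ l → (V l : Set G) ⊆ (V k : Set G) := by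
    intro k l h x hx
    exact hanti h hx
  have hFc : ∀ l, ∀ y ∈ A l, F y = c l := by
    intro l y hy
    rw [hF l y hy]
  -- measure computations
  have hVfin : ∀ n, μ (V n : Set G) ≠ ⊤ := fun n => (measure_lt_top μ _).ne
  have hVreal : ∀ n, (μ (V n : Set G)).toReal = (b n)⁻¹ := by
    intro n
    rw [hVmeas n, ENNReal.toReal_inv]
    have h1 : ((q : ENNReal) ^ (n * m n)).toReal = (q:ℝ) ^ (n * m n) := by
      rw [ENNReal.toReal_pow, ENNReal.toReal_natCast]
    rw [h1]
  have hA_toReal : ∀ l, (μ (A l)).toReal = (b l)⁻¹ - (b (l+1))⁻¹ := by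
    intro l
    have hsub : (V (l+1) : Set G) ⊆ (V l : Set G) := hVsub l (l+1) (Nat.le_succ l)
    have hdiff : μ (A l) = μ (V l : Set G) - μ (V (l+1) : Set G) :=
      measure_diff hsub (hVopen (l+1)).measurableSet.nullMeasurableSet (hVfin (l+1))
    rw [hdiff, ENNReal.toReal_sub_of_le (measure_mono hsub) (hVfin l), hVreal, hVreal]
  -- the approximating functions
  set S : ℕ → G → ℝ := fun N y =>
    ∑ l ∈ Finset.range (N+1), Set.indicator (A l) (fun _ => c l) y with hS_def
  have hS_meas : ∀ N, Measurable (S N) := by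
    intro N
    apply Finset.measurable_sum
    intro l _
    exact measurable_const.indicator (hAmeas l)
  have hS_val : ∀ N l y, y ∈ A l → S N y = if l ≤ N then c l else 0 := by
    intro N l y hy
    have hnot : ∀ l', l' ≠ l → Set.indicator (A l') (fun _ => c l') y = 0 := by
      intro l' hne
      apply Set.indicator_of_notMem
      intro hy'
      rcases lt_or_gt_of_ne hne with h1 | h1
      · exact hy'.2 (hVsub (l'+1) l h1 hy.1)
      · exact hy.2 (hVsub (l+1) l' h1 hy'.1)
    simp only [hS_def]
    by_cases h : l ≤ N
    · rw [if_pos h]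
      rw [Finset.sum_eq_single l (fun l' _ hne => hnot l' hne)
        (fun habs => absurd (Finset.mem_range.mpr (by omega : l < N + 1)) habs)]
      exact Set.indicator_of_mem hy _
    · rw [if_neg h]
      apply Finset.sum_eq_zero
      intro l' hl'
      have : l' ≠ l := by
        intro hEq
        rw [Finset.mem_range] at hl'
        omega
      exact hnot l' this
  have hS_int : ∀ N y, (∀ n, y ∈ (V n : Set G)) → S N y = 0 := by
    intro N y hall
    rw [hS_def]
    apply Finset.sum_eq_zero
    intro l _
    apply Set.indicator_of_notMem
    intro hy'
    exact hy'.2 (hall (l+1))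
  -- partition into pieces
  have hcover : ∀ y : G, (∀ n, y ∈ (V n : Set G)) ∨ ∃ l, y ∈ A l := by
    intro y
    by_cases h : ∀ n, y ∈ (V n : Set G)
    · exact Or.inl h
    · right
      push_neg at h
      have hex : ∃ k, y ∉ (V k : Set G) := h
      have h0 : y ∈ (V 0 : Set G) := by
        rw [hV0]; exact Set.mem_univ y
      have hk : y ∉ (V (Nat.find hex) : Set G) := Nat.find_spec hex
      have hkpos : Nat.find hex ≠ 0 := by
        intro h'
        rw [h'] at hk
        exact hk h0
      have hkk : Nat.find hex - 1 + 1 = Nat.find hex := by omega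
      refine ⟨Nat.find hex - 1, ⟨?_, ?_⟩⟩
      · exact not_not.mp (Nat.find_min hex (by omega : Nat.find hex - 1 < Nat.find hex))
      · rw [hkk]
        exact hk
  -- bounds and convergence
  have hF_bound : ∀ y, |F y| ≤ C := by
    intro y
    rcases hcover y with h | ⟨l, hl⟩
    · rw [hF0 y (Set.mem_iInter.mpr h)]
      simpa using hC0
    · rw [hFc l y hl]
      exact hc_bd l
  have hS_bound : ∀ N y, |S N y| ≤ C := by
    intro N y
    rcases hcover y with h | ⟨l, hl⟩
    · rw [hS_int N y h]; simpa using hC0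
    · rw [hS_val N l y hl]
      by_cases h : l ≤ N
      · rw [if_pos h]; exact hc_bd l
      · rw [if_neg h]; simpa using hC0
  have htends : ∀ y, Tendsto (fun N => S N y) atTop (𝓝 (F y)) := by
    intro y
    rcases hcover y with h | ⟨l, hl⟩
    · have hFy : F y = 0 := hF0 y (Set.mem_iInter.mpr h)
      rw [hFy]
      have : ∀ N, S N y = 0 := fun N => hS_int N y h
      simpa [this] using tendsto_const_nhds (α := ℝ) (f := atTop (α := ℕ))
    · apply tendsto_atTop_of_eventually_const (i₀ := l)
      intro N hN
      rw [hS_val N l y hl, if_pos hN, hFc l y hl]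
  have hFmeas : Measurable F :=
    measurable_of_tendsto_metrizable (fun N => hS_meas N)
      (tendsto_pi_nhds.mpr htends)
  have hFint : Integrable F μ := by
    refine (integrable_const C).mono' hFmeas.aestronglyMeasurable (ae_of_all _ ?_)
    intro y
    simpa [Real.norm_eq_abs] using hF_bound y
  -- integral of S N
  have hS_integrable : ∀ l : ℕ, Integrable (Set.indicator (A l) (fun _ : G => c l)) μ :=
    fun l => (integrable_const (c l)).indicator (hAmeas l)
  have hSint_eq : ∀ N, ∫ y, S N y ∂μ
      = ∑ l ∈ Finset.range (N+1), c l * ((b l)⁻¹ - (b (l+1))⁻¹) := by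
    intro N
    rw [hS_def]
    rw [integral_finset_sum _ (fun l _ => hS_integrable l)]
    apply Finset.sum_congr rfl
    intro l _
    rw [integral_indicator_const (c l) (hAmeas l), measureReal_def, hA_toReal l, smul_eq_mul, mul_comm]
  -- telescoping
  have htel : ∀ N, ∑ l ∈ Finset.range (N+1), c l * ((b l)⁻¹ - (b (l+1))⁻¹)
      = -(a (N+1)) - c N * (b (N+1))⁻¹ := by
    intro N
    induction N with
    | zero =>
      rw [Finset.sum_range_one, hc0, hb0]
      norm_num
      ring
    | succ k ih =>
      rw [Finset.sum_range_succ, ih]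
      have hbk : b (k+1) ≠ 0 := (hb_pos (k+1)).ne'
      have hck : c (k+1) = c k + (a (k+1) - a (k+2)) * b (k+1) := hcsucc k
      rw [hck]
      field_simp
      ring
  -- limits
  have hlim1 : Tendsto (fun N => a (N+1)) atTop (𝓝 0) := by
    apply squeeze_zero (fun N => (ha_pos (N+1)).le) (fun N => ?_)
      (tendsto_pow_atTop_nhds_zero_of_lt_one hs0.le hs1)
    have hcast : (((N+1) : ℕ) : ℝ) ≤ (((N+1) * m (N+1) : ℕ) : ℝ) :=
      Nat.cast_le.mpr (hnm (N+1))
    have h2 : α * (((N+1) * m (N+1) : ℕ) : ℝ) ≤ α * (((N+1) : ℕ) : ℝ) :=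
      mul_le_mul_of_nonpos_left hcast hα0.le
    have h3 : a (N+1) ≤ (q:ℝ) ^ (α * (((N+1) : ℕ) : ℝ)) :=
      Real.rpow_le_rpow_of_exponent_le hq1.le h2
    have h4 : (q:ℝ) ^ (α * (((N+1) : ℕ) : ℝ)) = s ^ (N+1) := by
      rw [hs_def, ← Real.rpow_natCast ((q:ℝ) ^ α) (N+1), ← Real.rpow_mul hq0'.le]
    have h5 : s ^ (N+1) ≤ s ^ N := pow_le_pow_of_le_one hs0.le hs1.le (Nat.le_succ N)
    calc a (N+1) ≤ s ^ (N+1) := h4 ▸ h3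
      _ ≤ s ^ N := h5
  have hlim2 : Tendsto (fun N => c N * (b (N+1))⁻¹) atTop (𝓝 0) := by
    refine squeeze_zero_norm (a := fun N => C * (1/2 : ℝ) ^ N) (fun N => ?_) ?_
    · have hb1 : (0:ℝ) < (2:ℝ) ^ (N+1) := by positivity
      have hinv : (b (N+1))⁻¹ ≤ ((2:ℝ) ^ (N+1))⁻¹ :=
        inv_anti₀ hb1 (hb_ge2 (N+1))
      have hinv0 : (0:ℝ) ≤ (b (N+1))⁻¹ := (inv_pos.mpr (hb_pos (N+1))).le
      calc ‖c N * (b (N+1))⁻¹‖ = |c N| * (b (N+1))⁻¹ := by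
            rw [norm_mul, Real.norm_eq_abs, Real.norm_eq_abs, abs_of_nonneg hinv0]
        _ ≤ C * ((2:ℝ) ^ (N+1))⁻¹ := by
            apply mul_le_mul (hc_bd N) hinv hinv0 hC0
        _ = C * ((1/2:ℝ) ^ (N+1)) := by
            rw [one_div, inv_pow]
        _ ≤ C * (1/2:ℝ) ^ N := by
            apply mul_le_mul_of_nonneg_left _ hC0
            exact pow_le_pow_of_le_one (by norm_num) (by norm_num) (Nat.le_succ N)
    · have := (tendsto_pow_atTop_nhds_zero_of_lt_one (by norm_num : (0:ℝ) ≤ 1/2)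
        (by norm_num : (1/2:ℝ) < 1)).const_mul C
      simpa using this
  have hlim : Tendsto (fun N => ∫ y, S N y ∂μ) atTop (𝓝 0) := by
    have heq : (fun N => ∫ y, S N y ∂μ)
        = fun N => -(a (N+1)) - c N * (b (N+1))⁻¹ := by
      funext N
      rw [hSint_eq N, htel N]
    rw [heq]
    have := hlim1.neg.sub hlim2
    simpa using this
  -- dominated convergence
  have hdct : Tendsto (fun N => ∫ y, S N y ∂μ) atTop (𝓝 (∫ y, F y ∂μ)) := by
    apply tendsto_integral_of_dominated_convergence (fun _ => C)
      (fun N => (hS_meas N).aestronglyMeasurable) (integrable_const C)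
      (fun N => ae_of_all _ fun y => by simpa [Real.norm_eq_abs] using hS_bound N y)
      (ae_of_all _ htends)
  exact ⟨hFint, tendsto_nhds_unique hdct hlim⟩
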